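/- Let A be a commutative ring, f ∈ A, and consider the ring homomorphism ρ : A → ∏_{𝔭 ∈ D(f)} A_𝔭 given by the product of localization maps. Every element of the subring of the product generated by ρ(A) together with the inverses ρ(b)^{-1} for those b ∈ A with ρ(b) invertible, lies in the image of the canonical map A_f → ∏_{𝔭 ∈ D(f)} A_𝔭. In particular, that subring is isomorphic to A_f. -/
import Mathlib


/-- The index type of primes in the basic open set `D(f)`. -/
abbrev Df (A : Type*) [CommRing A] (f : A) : Type _ :=
  {p : PrimeSpectrum A // p ∈ PrimeSpectrum.basicOpen f}

lemma pi_isUnit_iff {ι : Type*} {M : ι → Type*} [∀ i, Monoid (M i)] (x : ∀ i, M i) :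
    IsUnit x ↔ ∀ i, IsUnit (x i) := by
  constructor
  · intro h i
    exact h.map (Pi.evalMonoidHom M i)
  · intro h
    exact ⟨⟨x, fun i => ↑(h i).unit⁻¹,
      funext fun i => by rw [Pi.mul_apply, Pi.one_apply]; exact (h i).mul_val_inv,
      funext fun i => by rw [Pi.mul_apply, Pi.one_apply]; exact (h i).val_inv_mul⟩, rfl⟩

set_option maxHeartbeats 1000000 in
theorem subring_gen_by_image_and_inverses_eq_image_away
    (A : Type*) [CommRing A] (f : A)
    (ρ : A →+* ∀ p : Df A f, Localization.AtPrime p.1.asIdeal)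
    (hρ : ρ = Pi.ringHom (fun p : Df A f =>
      algebraMap A (Localization.AtPrime p.1.asIdeal)))
    (Φ : Localization.Away f →+* ∀ p : Df A f, Localization.AtPrime p.1.asIdeal)
    (hΦ : Φ = Pi.ringHom (fun p : Df A f =>
      Localization.awayLift (algebraMap A (Localization.AtPrime p.1.asIdeal)) f
        (IsLocalization.map_units (M := p.1.asIdeal.primeCompl) _
          ⟨f, (PrimeSpectrum.mem_basicOpen f p.1).mp p.2⟩)))
    (S : Subring (∀ p : Df A f, Localization.AtPrime p.1.asIdeal))
    (hS : S = Subring.closure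
      (Set.range ρ ∪ {x | ∃ b : A, IsUnit (ρ b) ∧ x * ρ b = 1})) :
    (∀ x ∈ S, x ∈ Φ.range) ∧ Nonempty (Localization.Away f ≃+* S) := by
  -- Φ ∘ (algebraMap A (Away f)) = ρ
  have hcomp : ∀ a : A, Φ (algebraMap A (Localization.Away f) a) = ρ a := by
    intro a
    subst hΦ hρ
    funext p
    simp [Pi.ringHom, Localization.awayLift]
  -- IsUnit (ρ b) ↔ b ∉ p for all p ∈ D(f)
  have hunit_iff : ∀ b : A, IsUnit (ρ b) ↔ ∀ p : Df A f, b ∈ p.1.asIdeal.primeCompl := by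
    intro b
    subst hρ
    rw [pi_isUnit_iff]
    exact forall_congr' fun p =>
      IsLocalization.AtPrime.isUnit_to_map_iff (Localization.AtPrime p.1.asIdeal) p.1.asIdeal b
  -- if ρ b is a unit, then b becomes a unit in A_f
  have hbunit : ∀ b : A, IsUnit (ρ b) → IsUnit (algebraMap A (Localization.Away f) b) := by
    intro b hb
    rw [hunit_iff] at hb
    have hrad : f ∈ (Ideal.span {b}).radical := by
      rw [Ideal.radical_eq_sInf, Submodule.mem_sInf]
      rintro J ⟨hJ1, hJ2⟩
      by_contra hf
      have hbJ : b ∈ J := hJ1 (Ideal.mem_span_singleton_self b)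
      have := hb ⟨⟨J, hJ2⟩, (PrimeSpectrum.mem_basicOpen f _).mpr hf⟩
      exact this hbJ
    obtain ⟨n, hn⟩ := hrad
    obtain ⟨c, hc⟩ := Ideal.mem_span_singleton'.mp hn
    have hun : IsUnit (algebraMap A (Localization.Away f) (c * b)) := by
      rw [hc]
      exact IsLocalization.map_units (M := Submonoid.powers f) _ ⟨f ^ n, n, rfl⟩
    rw [map_mul] at hun
    exact isUnit_of_mul_isUnit_right hun
  -- injectivity of Φ
  have hinj : Function.Injective Φ := by
    rw [injective_iff_map_eq_zero]
    intro z hz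
    obtain ⟨⟨a, m⟩, hm⟩ := IsLocalization.surj (M := Submonoid.powers f) z
    dsimp only at hm
    have hρa : ρ a = 0 := by
      rw [← hcomp]
      have := congrArg Φ hm
      rw [map_mul, hcomp, hz, zero_mul] at this
      exact this.symm
    -- annihilator of a
    set I : Ideal A := Ideal.torsionOf A A a with hI
    have hfI : f ∈ I.radical := by
      rw [Ideal.radical_eq_sInf, Submodule.mem_sInf]
      rintro J ⟨hJ1, hJ2⟩
      by_contra hf
      set p : Df A f := ⟨⟨J, hJ2⟩, (PrimeSpectrum.mem_basicOpen f _).mpr hf⟩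
      have h0 : algebraMap A (Localization.AtPrime p.1.asIdeal) a = 0 := by
        have := congrFun (hρ ▸ hρa) p
        simpa [Pi.ringHom] using this
      obtain ⟨s, hs⟩ := (IsLocalization.map_eq_zero_iff p.1.asIdeal.primeCompl _ a).mp h0
      exact s.2 (hJ1 (by simpa [hI, Ideal.mem_torsionOf_iff, smul_eq_mul] using hs))
    obtain ⟨n, hn⟩ := hfI
    have ha0 : algebraMap A (Localization.Away f) a = 0 := by
      rw [IsLocalization.map_eq_zero_iff (Submonoid.powers f)]
      exact ⟨⟨f ^ n, n, rfl⟩, by simpa [hI, Ideal.mem_torsionOf_iff, smul_eq_mul] using hn⟩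
    have h0 : z * algebraMap A (Localization.Away f) m = 0 := by rw [hm, ha0]
    have hu := IsLocalization.map_units (Localization.Away f) m
    exact (hu.mul_left_eq_zero).mp h0
  -- S ≤ Φ.range
  have hSle : ∀ x ∈ S, x ∈ Φ.range := by
    rw [hS]
    intro x hx
    refine Subring.closure_le.mpr ?_ hx
    rintro y (⟨a, rfl⟩ | ⟨b, hb, hyb⟩)
    · exact ⟨algebraMap A (Localization.Away f) a, hcomp a⟩
    · have hu := hbunit b hb
      refine ⟨(↑hu.unit⁻¹ : Localization.Away f), ?_⟩
      have h1 : Φ (↑hu.unit⁻¹ : Localization.Away f) * ρ b = 1 := by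
        rw [← hcomp b, ← map_mul, IsUnit.val_inv_mul, map_one]
      -- uniqueness of inverse
      calc Φ (↑hu.unit⁻¹ : Localization.Away f)
          = Φ (↑hu.unit⁻¹ : Localization.Away f) * (ρ b * y) := by
            rw [mul_comm (ρ b) y, hyb, mul_one]
        _ = (Φ (↑hu.unit⁻¹ : Localization.Away f) * ρ b) * y := by ring
        _ = y := by rw [h1, one_mul]
  refine ⟨hSle, ?_⟩
  -- Φ.range ≤ S
  have hfu : IsUnit (ρ f) := (hunit_iff f).mpr fun p => (PrimeSpectrum.mem_basicOpen f p.1).mp p.2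
  have hinvS : (↑hfu.unit⁻¹ : ∀ p : Df A f, Localization.AtPrime p.1.asIdeal) ∈ S := by
    rw [hS]
    exact Subring.subset_closure (Or.inr ⟨f, hfu, IsUnit.val_inv_mul hfu⟩)
  have hrange : Φ.range ≤ S := by
    rintro x ⟨z, rfl⟩
    obtain ⟨⟨a, m⟩, hm⟩ := IsLocalization.surj (M := Submonoid.powers f) z
    dsimp only at hm
    obtain ⟨n, hn⟩ := m.2
    dsimp only at hn
    have key : Φ z * ρ f ^ n = ρ a := by
      have h1 := congrArg Φ hm
      rw [map_mul, hcomp, hcomp] at h1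
      rw [← h1, ← hn, map_pow]
    have hfinv : (ρ f * ↑hfu.unit⁻¹ : ∀ p : Df A f, Localization.AtPrime p.1.asIdeal) = 1 :=
      IsUnit.mul_val_inv hfu
    have hzeq : Φ z = ρ a * (↑hfu.unit⁻¹ : ∀ p : Df A f, Localization.AtPrime p.1.asIdeal) ^ n := by
      calc Φ z = Φ z * (ρ f * ↑hfu.unit⁻¹) ^ n := by rw [hfinv, one_pow, mul_one]
        _ = (Φ z * ρ f ^ n) * (↑hfu.unit⁻¹ : ∀ p : Df A f, Localization.AtPrime p.1.asIdeal) ^ n := by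
            ring
        _ = ρ a * (↑hfu.unit⁻¹ : ∀ p : Df A f, Localization.AtPrime p.1.asIdeal) ^ n := by rw [key]
    rw [hzeq]
    exact S.mul_mem (by rw [hS]; exact Subring.subset_closure (Or.inl ⟨a, rfl⟩))
      (S.pow_mem hinvS n)
  have hSeq : S = Φ.range := le_antisymm hSle hrange
  exact ⟨(RingEquiv.ofBijective Φ.rangeRestrict
    ⟨fun x y h => hinj (congrArg Subtype.val h), Φ.rangeRestrict_surjective⟩).trans
    (RingEquiv.subringCongr hSeq.symm)⟩
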